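/- Every action of a countable free group F (on countably many generators) on a countable set X is sofic. -/

import Mathlib

open scoped Classical Pointwise

noncomputable def hDist {A : Type*} [Fintype A] (σ τ : Equiv.Perm A) : ℝ :=
  ((Finset.univ.filter fun a => σ a ≠ τ a).card : ℝ) / (Fintype.card A : ℝ)

/-- `φ : G → Sym(Fin n)` is an `(F, E, ε)`-orbit approximation of the action `α : G ↷ X`. -/
def IsOrbitApprox {G X : Type*} [Group G] {n : ℕ} (α : G →* Equiv.Perm X)
    (F : Finset G) (E : Finset X) (ε : ℝ) (φ : G → Equiv.Perm (Fin n)) : Prop :=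
  ∃ (m : ℕ) (S : Finset (Fin n)) (π : Fin n → X → Fin m),
    ((S.card : ℝ) > (1 - ε) * (n : ℝ)) ∧
    (∀ s ∈ S, Set.InjOn (π s) (E : Set X)) ∧
    (∀ s ∈ S, ∀ g ∈ F, ∀ x ∈ E, φ g s ∈ S → α g⁻¹ x ∈ E →
      π (φ g s) x = π s (α g⁻¹ x))

/-- Soficity of an action `α : G ↷ X` given as a homomorphism `G →* Sym(X)`. -/
def SoficAction {G X : Type*} [Group G] (α : G →* Equiv.Perm X) : Prop :=
  ∀ (F : Finset G) (E : Finset X) (ε : ℝ), 0 < ε →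
    ∃ (n : ℕ) (φ : G → Equiv.Perm (Fin n)),
      φ 1 = 1 ∧
      (∀ g ∈ F, ∀ h ∈ F, hDist (φ (g * h)) (φ g * φ h) < ε) ∧
      IsOrbitApprox α F E ε φ

/-- Soficity of a group. -/
def SoficGroup (G : Type*) [Group G] : Prop :=
  ∀ (F : Finset G) (ε : ℝ), 0 < ε →
    ∃ (n : ℕ) (φ : G → Equiv.Perm (Fin n)),
      φ 1 = 1 ∧
      (∀ g ∈ F, ∀ h ∈ F, hDist (φ (g * h)) (φ g * φ h) < ε) ∧
      (∀ g ∈ F, g ≠ 1 → hDist 1 (φ g) > 1 - ε)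

/-- Any injection defined on a subset of a finite type extends to a permutation. -/
private lemma exists_perm_agree {A : Type*} [Fintype A]
    (s : Finset A) (f : A → A) (hf : Set.InjOn f ↑s) :
    ∃ σ : Equiv.Perm A, ∀ y ∈ s, σ y = f y := by
  classical
  have hmem : ∀ y : {x // x ∈ s}, f ↑y ∈ s.image f := fun y => Finset.mem_image_of_mem f y.2
  let u : {x // x ∈ s} ≃ {x // x ∈ s.image f} :=
    Equiv.ofBijective (fun y => ⟨f ↑y, hmem y⟩) (by
      constructor
      · intro y z h
        exact Subtype.ext (hf (Finset.mem_coe.2 y.2) (Finset.mem_coe.2 z.2)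
          (congrArg Subtype.val h))
      · rintro ⟨x, hx⟩
        obtain ⟨y, hy, hfy⟩ := Finset.mem_image.mp hx
        exact ⟨⟨y, hy⟩, Subtype.ext hfy⟩)
  have hcard : Fintype.card {x // ¬ x ∈ s} = Fintype.card {x // ¬ x ∈ s.image f} := by
    rw [Fintype.card_subtype_compl, Fintype.card_subtype_compl, Fintype.card_congr u]
  let v : {x // ¬ x ∈ s} ≃ {x // ¬ x ∈ s.image f} := Fintype.equivOfCardEq hcard
  refine ⟨Equiv.subtypeCongr u v, ?_⟩
  intro y hy
  simp [Equiv.subtypeCongr, hy, u]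
  rfl

theorem stmt_9 {ι X : Type*} [Countable ι] [Countable X]
    (α : FreeGroup ι →* Equiv.Perm X) :
    SoficAction α := by
  classical
  intro F E ε hε
  -- letters appearing in F and the maximal word length in F
  set I : Finset ι := F.biUnion (fun g => (g.toWord.map Prod.fst).toFinset) with hI
  set L : ℕ := F.sup (fun g => g.toWord.length) with hLdef
  -- the growing windows
  set step : Finset X → Finset X := fun Dk =>
    Dk ∪ I.biUnion fun i =>
      Dk.image (α (FreeGroup.of i)) ∪ Dk.image ⇑(α (FreeGroup.of i))⁻¹ with hstepdef
  set D : ℕ → Finset X := fun k => step^[k] E with hDdef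
  have hD0 : D 0 = E := rfl
  have hDsucc : ∀ k, D (k + 1) = step (D k) := fun k => Function.iterate_succ_apply' step k E
  have hsub : ∀ k, D k ⊆ D (k + 1) := fun k => by
    rw [hDsucc]; exact Finset.subset_union_left
  have hmono : ∀ j k, j ≤ k → D j ⊆ D k := by
    intro j k h
    induction k, h using Nat.le_induction with
    | base => exact subset_rfl
    | succ k hk ih => exact ih.trans (hsub k)
  have hstep1 : ∀ k, ∀ i ∈ I, ∀ x ∈ D k, α (FreeGroup.of i) x ∈ D (k + 1) := by
    intro k i hi x hx
    rw [hDsucc]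
    refine Finset.mem_union_right _ (Finset.mem_biUnion.mpr ⟨i, hi, ?_⟩)
    exact Finset.mem_union_left _ (Finset.mem_image_of_mem _ hx)
  have hstep2 : ∀ k, ∀ i ∈ I, ∀ x ∈ D k, (α (FreeGroup.of i))⁻¹ x ∈ D (k + 1) := by
    intro k i hi x hx
    rw [hDsucc]
    refine Finset.mem_union_right _ (Finset.mem_biUnion.mpr ⟨i, hi, ?_⟩)
    exact Finset.mem_union_right _ (Finset.mem_image_of_mem _ hx)
  set DL : Finset X := D L with hDL
  have hEDL : E ⊆ DL := hmono 0 L (Nat.zero_le L)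
  -- extend the partial action of each generator on `DL` to a permutation of `DL`
  have hσex : ∀ i : ι, ∃ σ : Equiv.Perm {x // x ∈ DL},
      ∀ y : {x // x ∈ DL}, α (FreeGroup.of i) ↑y ∈ DL → ↑(σ y) = α (FreeGroup.of i) ↑y := by
    intro i
    set s : Finset {x // x ∈ DL} :=
      Finset.univ.filter (fun y => α (FreeGroup.of i) ↑y ∈ DL) with hs
    set f : {x // x ∈ DL} → {x // x ∈ DL} := fun y =>
      if h : α (FreeGroup.of i) ↑y ∈ DL then ⟨_, h⟩ else y with hfdef
    have hfInj : Set.InjOn f ↑s := by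
      intro y hy z hz h
      simp only [hs, Finset.coe_filter, Set.mem_setOf_eq] at hy hz
      rw [hfdef] at h
      simp only [dif_pos hy.2, dif_pos hz.2] at h
      have h2 : α (FreeGroup.of i) ↑y = α (FreeGroup.of i) ↑z := congrArg Subtype.val h
      exact Subtype.ext ((α (FreeGroup.of i)).injective h2)
    obtain ⟨σ, hσ⟩ := exists_perm_agree s f hfInj
    refine ⟨σ, fun y hy => ?_⟩
    rw [hσ y (by simp [hs, hy]), hfdef]
    simp [dif_pos hy]
  choose σ hσ using hσex
  have hσinv : ∀ i (y : {x // x ∈ DL}), (α (FreeGroup.of i))⁻¹ ↑y ∈ DL →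
      ↑((σ i)⁻¹ y) = (α (FreeGroup.of i))⁻¹ ↑y := by
    intro i y h
    have h3 : σ i ⟨_, h⟩ = y := by
      refine Subtype.ext ?_
      rw [hσ i ⟨_, h⟩ (by simp [y.2])]
      simp
    have h4 : (σ i)⁻¹ y = ⟨_, h⟩ := Equiv.Perm.inv_eq_iff_eq.mpr h3.symm
    rw [h4]
  -- the two "letter" maps
  set πα : (ι × Bool) → Equiv.Perm X :=
    fun p => cond p.2 (α (FreeGroup.of p.1)) (α (FreeGroup.of p.1))⁻¹ with hπα
  set πσ : (ι × Bool) → Equiv.Perm {x // x ∈ DL} :=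
    fun p => cond p.2 (σ p.1) (σ p.1)⁻¹ with hπσ
  -- key word lemma
  have key : ∀ (w : List (ι × Bool)), (∀ p ∈ w, p.1 ∈ I) → ∀ k, k + w.length ≤ L →
      ∀ (y : {x // x ∈ DL}), ↑y ∈ D k →
        ((w.map πα).prod (↑y : X) ∈ D (k + w.length) ∧
         ↑((w.map πσ).prod y) = (w.map πα).prod (↑y : X)) := by
    intro w
    induction w with
    | nil => intro _ k _ y hy; simpa using hy
    | cons p t ih =>
      intro hlet k hlen y hy
      have hpI : p.1 ∈ I := hlet p List.mem_cons_self
      have hlt : ∀ q ∈ t, q.1 ∈ I := fun q hq => hlet q (List.mem_cons_of_mem p hq)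
      have hlen' : k + t.length ≤ L := by rw [List.length_cons] at hlen; omega
      obtain ⟨hy1, hy2⟩ := ih hlt k hlen' y hy
      have hstep : πα p ((t.map πα).prod (↑y : X)) ∈ D (k + t.length + 1) := by
        rcases p with ⟨i, b⟩
        cases b
        · exact hstep2 _ i hpI _ hy1
        · exact hstep1 _ i hpI _ hy1
      have hlen'' : k + t.length + 1 ≤ L := by
        rw [List.length_cons] at hlen; omega
      have hzDL : ((t.map πα).prod (↑y : X)) ∈ DL :=
        hmono _ _ hlen' hy1
      have hstepDL : πα p ((t.map πα).prod (↑y : X)) ∈ DL :=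
        hmono _ _ hlen'' hstep
      have hzcoe : ((↑((t.map πσ).prod y)) : X) = (t.map πα).prod (↑y : X) := hy2
      have hzsub : (t.map πσ).prod y = ⟨(t.map πα).prod (↑y : X), hzDL⟩ :=
        Subtype.ext hzcoe
      have hσz : ↑(πσ p ⟨(t.map πα).prod (↑y : X), hzDL⟩) = πα p ((t.map πα).prod (↑y : X)) := by
        rcases p with ⟨i, b⟩
        cases b
        · exact hσinv i ⟨_, hzDL⟩ hstepDL
        · exact hσ i ⟨_, hzDL⟩ hstepDL
      constructor
      · have hform : ((p :: t).map πα).prod (↑y : X) = πα p ((t.map πα).prod (↑y : X)) := by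
          simp [List.map_cons, List.prod_cons, Equiv.Perm.mul_apply]
        rw [hform]
        exact hstep
      · simp only [List.map_cons, List.prod_cons, Equiv.Perm.mul_apply]
        rw [hzsub, hσz]
  -- α as a lift
  have hαhom : ∀ (w : List (ι × Bool)), α (FreeGroup.mk w) = (w.map πα).prod := by
    have hα : α = FreeGroup.lift (fun i => α (FreeGroup.of i)) :=
      FreeGroup.ext_hom _ _ (fun a => by simp)
    intro w
    rw [hα, FreeGroup.lift_mk]
  set β : FreeGroup ι →* Equiv.Perm {x // x ∈ DL} := FreeGroup.lift σ with hβdef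
  have hβ : ∀ (w : List (ι × Bool)), β (FreeGroup.mk w) = (w.map πσ).prod := by
    intro w
    rw [hβdef, FreeGroup.lift_mk]
  -- main agreement lemma on E
  have keyF : ∀ g ∈ F, ∀ (y : {x // x ∈ DL}), ↑y ∈ E →
      ↑(β g⁻¹ y) = α g⁻¹ (↑y : X) := by
    intro g hg y hy
    have h1 : FreeGroup.mk (g⁻¹).toWord = g⁻¹ := FreeGroup.mk_toWord
    have hlen : (g⁻¹).toWord.length ≤ L := by
      rw [FreeGroup.toWord_inv, FreeGroup.invRev_length]
      exact Finset.le_sup (f := fun g => g.toWord.length) hg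
    have hlet : ∀ p ∈ (g⁻¹).toWord, p.1 ∈ I := by
      intro p hp
      rw [FreeGroup.toWord_inv, FreeGroup.invRev, List.mem_reverse, List.mem_map] at hp
      obtain ⟨q, hq, hqp⟩ := hp
      refine Finset.mem_biUnion.mpr ⟨g, hg, ?_⟩
      rw [List.mem_toFinset, List.mem_map]
      exact ⟨q, hq, by rw [← hqp]⟩
    have hk := key (g⁻¹).toWord hlet 0 (by simpa using hlen) y (by rwa [hD0])
    rw [← h1, hβ, hαhom]
    exact hk.2
  -- assemble the sofic approximation
  set A := Equiv.Perm {x // x ∈ DL} with hA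
  set n := Fintype.card A with hn
  set e : A ≃ Fin n := Fintype.equivFin A with he
  set φ : FreeGroup ι → Equiv.Perm (Fin n) :=
    fun g => e.permCongr (Equiv.mulLeft (β g)) with hφ
  have hφ1 : φ 1 = 1 := by
    ext a
    simp [hφ]
  have hφmul : ∀ g h, φ (g * h) = φ g * φ h := by
    intro g h
    ext a
    simp [hφ, map_mul, Equiv.Perm.mul_apply, mul_assoc]
  refine ⟨n, φ, hφ1, ?_, ?_⟩
  · intro g hg h hh
    rw [hφmul]
    have h0 : hDist (φ g * φ h) (φ g * φ h) = 0 := by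
      simp [hDist]
    rw [h0]; exact hε
  · set m := Fintype.card {x // x ∈ DL} with hm
    set c : {x // x ∈ DL} ≃ Fin m := Fintype.equivFin _ with hc
    refine ⟨m + 1, Finset.univ,
      fun a x => if hx : x ∈ DL then Fin.castSucc (c ((e.symm a)⁻¹ ⟨x, hx⟩)) else Fin.last m,
      ?_, ?_, ?_⟩
    · have hn1 : 0 < n := Fintype.card_pos
      have hcard : ((Finset.univ : Finset (Fin n)).card : ℝ) = (n : ℝ) := by
        simp
      rw [hcard]
      have h1n : (1 : ℝ) ≤ (n : ℝ) := by exact_mod_cast hn1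
      nlinarith
    · intro s _
      intro x hx y hy hxy
      have hx' : x ∈ DL := hEDL hx
      have hy' : y ∈ DL := hEDL hy
      simp only [dif_pos hx', dif_pos hy'] at hxy
      have h2 := Fin.castSucc_injective _ hxy
      have h3 := c.injective h2
      have h4 := ((e.symm s)⁻¹).injective h3
      exact congrArg Subtype.val h4
    · intro s _ g hg x hx _ hgx
      have hx' : x ∈ DL := hEDL hx
      have hgx' : α g⁻¹ x ∈ DL := hEDL hgx
      simp only [dif_pos hx', dif_pos hgx']
      suffices h : (e.symm (φ g s))⁻¹ ⟨x, hx'⟩ = (e.symm s)⁻¹ ⟨α g⁻¹ x, hgx'⟩ by rw [h]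
      have h1 : e.symm (φ g s) = β g * e.symm s := by
        simp [hφ]
      have h2 : (β g)⁻¹ ⟨x, hx'⟩ = ⟨α g⁻¹ x, hgx'⟩ := by
        refine Subtype.ext ?_
        rw [← map_inv]
        exact keyF g hg ⟨x, hx'⟩ hx
      rw [h1, mul_inv_rev, Equiv.Perm.mul_apply, h2]
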